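/- Let H be a mesh and τ = [c_1{xs_1}s_1, …, c_r{xs_r}s_r] a distributed type with H ⊢ τ. Then the image of the base offset map ⟦τ⟧_T, over all index tuples over H, is exactly the set of tuples (m_1, …, m_r) ∈ ℕ^r such that for every i, c_i divides m_i and m_i < s_i. -/

import Mathlib

/-! ## Meshes, index tuples, distributed dimensions and types -/

structure Mesh where
  axes : Finset String
  size : String → ℕ
  size_pos : ∀ x ∈ axes, 1 ≤ size x

def Mesh.hasAxis (H : Mesh) (x : String) (n : ℕ) : Prop :=
  x ∈ H.axes ∧ H.size x = n

abbrev IndexTuple (H : Mesh) : Type :=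
  {ι : String → ℕ // ∀ x : String, (x ∈ H.axes → ι x < H.size x) ∧ (x ∉ H.axes → ι x = 0)}

structure Dim where
  tile : ℕ
  axes : List String
  global : ℕ
deriving DecidableEq

abbrev DType := List Dim

def Mesh.WFDim (H : Mesh) (d : Dim) : Prop :=
  1 ≤ d.tile ∧ d.axes.Nodup ∧ (∀ x ∈ d.axes, x ∈ H.axes) ∧
    d.tile * (d.axes.map H.size).prod = d.global

def Mesh.WFType (H : Mesh) (τ : DType) : Prop :=
  (∀ d ∈ τ, H.WFDim d) ∧ List.Pairwise (fun d e => ∀ x ∈ d.axes, x ∉ e.axes) τ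

def globaltype (τ : DType) : List ℕ := τ.map Dim.global
def localtype (τ : DType) : List ℕ := τ.map Dim.tile
def localsize (τ : DType) : ℕ := (τ.map Dim.tile).prod

def typeAxes : DType → List String
  | [] => []
  | d :: τ => d.axes ++ typeAxes τ

/-- Base offset map of a distributed dimension, `⟦c{xs}n⟧_D`. -/
def dimOffset (H : Mesh) : ℕ → List String → (String → ℕ) → ℕ
  | _, [], _ => 0
  | c, x :: xs, ι => c * ι x + dimOffset H (c * H.size x) xs ι

abbrev BOM (H : Mesh) : Type := IndexTuple H → List ℕ

/-- Base offset map of a distributed type, `⟦τ⟧_T`. -/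
def typeOffset (H : Mesh) (τ : DType) : BOM H :=
  fun ι => τ.map (fun d => dimOffset H d.tile d.axes ι.val)

/-! ## Collective operations (high-level typing rules) -/

inductive Label where
  | allGather (i : ℕ)
  | dynSlice (i : ℕ) (x : String)
  | allToAll (i j : ℕ)
  | allPermute
deriving DecidableEq

inductive OpKind where
  | gather | slice | toAll | permute
deriving DecidableEq

def Label.kind : Label → OpKind
  | .allGather _ => .gather
  | .dynSlice _ _ => .slice
  | .allToAll _ _ => .toAll
  | .allPermute => .permute

inductive Step (H : Mesh) : Label → DType → DType → Prop where
  | allGather {τ : DType} (i : ℕ) {c : ℕ} {x : String} {xs : List String} {s n : ℕ}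
      (hwf : H.WFType τ) (hx : H.hasAxis x n)
      (hi : τ[i]? = some ⟨c, x :: xs, s⟩) :
      Step H (.allGather i) τ (τ.set i ⟨c * n, xs, s⟩)
  | dynSlice {τ : DType} (i : ℕ) (x : String) {c : ℕ} {xs : List String} {s n : ℕ}
      (hwf : H.WFType τ) (hx : H.hasAxis x n) (hfresh : x ∉ typeAxes τ)
      (hi : τ[i]? = some ⟨c * n, xs, s⟩) :
      Step H (.dynSlice i x) τ (τ.set i ⟨c, x :: xs, s⟩)
  | allToAll {τ : DType} (i j : ℕ) {ci : ℕ} {x : String} {xsi : List String} {si cj : ℕ}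
      {xsj : List String} {sj n : ℕ}
      (hwf : H.WFType τ) (hij : i ≠ j) (hx : H.hasAxis x n)
      (hi : τ[i]? = some ⟨ci, x :: xsi, si⟩)
      (hj : τ[j]? = some ⟨cj, xsj, sj⟩)
      (hdvd : n ∣ cj) :
      Step H (.allToAll i j) τ ((τ.set i ⟨ci * n, xsi, si⟩).set j ⟨cj / n, x :: xsj, sj⟩)
  | allPermute {τ₁ τ₂ : DType}
      (hwf1 : H.WFType τ₁) (hwf2 : H.WFType τ₂)
      (hl : localtype τ₁ = localtype τ₂) (hg : globaltype τ₁ = globaltype τ₂) :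
      Step H .allPermute τ₁ τ₂

/-! ## Sequences of collective operations -/

inductive CSeq (H : Mesh) : DType → DType → Type where
  | nil (τ : DType) : CSeq H τ τ
  | cons {τ₁ τ₂ τ₃ : DType} (p : Label) (h : Step H p τ₁ τ₂) (s : CSeq H τ₂ τ₃) : CSeq H τ₁ τ₃

def CSeq.labels {H : Mesh} : {τ₁ τ₂ : DType} → CSeq H τ₁ τ₂ → List Label
  | _, _, .nil _ => []
  | _, _, .cons p _ s => p :: s.labels

def CSeq.typesList {H : Mesh} : {τ₁ τ₂ : DType} → CSeq H τ₁ τ₂ → List DType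
  | _, _, .nil τ => [τ]
  | τ, _, .cons _ _ s => τ :: s.typesList

/-- The height 𝔥 of a sequence: the maximum `localsize` over all types in it. -/
def CSeq.height {H : Mesh} {τ₁ τ₂ : DType} (s : CSeq H τ₁ τ₂) : ℕ :=
  (s.typesList.map localsize).foldr max 0

/-- Cost of a single step with source `σ₁` and target `σ₂`. -/
def stepCost (p : Label) (σ₁ σ₂ : DType) : ℕ :=
  match p with
  | .allGather _ => localsize σ₂
  | .dynSlice _ _ => 0
  | .allToAll _ _ => localsize σ₁
  | .allPermute => localsize σ₁

def CSeq.cost {H : Mesh} : {τ₁ τ₂ : DType} → CSeq H τ₁ τ₂ → ℕ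
  | _, _, .nil _ => 0
  | _, _, @CSeq.cons _ σ₁ σ₂ _ p _ s => stepCost p σ₁ σ₂ + s.cost

/-- Normal form: labels matched by `dynSlice* {allToAll | allPermute}* allGather*`. -/
def NormalFormK (ks : List OpKind) : Prop :=
  ∃ a b c : List OpKind, ks = a ++ b ++ c ∧
    (∀ k ∈ a, k = OpKind.slice) ∧
    (∀ k ∈ b, k = OpKind.toAll ∨ k = OpKind.permute) ∧
    (∀ k ∈ c, k = OpKind.gather)

/-! ## Weak collectives -/

/-- Equivalence of base offset maps. -/
def bomEquiv (H : Mesh) (β₁ β₂ : BOM H) : Prop :=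
  ∃ π : Equiv.Perm (IndexTuple H), β₂ = β₁ ∘ π

/-- The weak collective relation `⟦τ₁⟧_E ▶^p ⟦τ₂⟧_E`, represented on types. -/
def WeakStep (H : Mesh) (p : Label) (τ₁ τ₂ : DType) : Prop :=
  p ≠ Label.allPermute ∧ H.WFType τ₁ ∧ H.WFType τ₂ ∧
  ∃ σ₁ σ₂ : DType, Step H p σ₁ σ₂ ∧
    bomEquiv H (typeOffset H σ₁) (typeOffset H τ₁) ∧
    bomEquiv H (typeOffset H σ₂) (typeOffset H τ₂)

inductive WkSeq (H : Mesh) : DType → DType → Type where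
  | nil (τ : DType) : WkSeq H τ τ
  | cons {τ₁ τ₂ τ₃ : DType} (p : Label) (h : WeakStep H p τ₁ τ₂) (s : WkSeq H τ₂ τ₃) :
      WkSeq H τ₁ τ₃

def WkSeq.labels {H : Mesh} : {τ₁ τ₂ : DType} → WkSeq H τ₁ τ₂ → List Label
  | _, _, .nil _ => []
  | _, _, .cons p _ s => p :: s.labels

def WkSeq.typesList {H : Mesh} : {τ₁ τ₂ : DType} → WkSeq H τ₁ τ₂ → List DType
  | _, _, .nil τ => [τ]
  | τ, _, .cons _ _ s => τ :: s.typesList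

def WkSeq.height {H : Mesh} {τ₁ τ₂ : DType} (s : WkSeq H τ₁ τ₂) : ℕ :=
  (s.typesList.map localsize).foldr max 0

def WkSeq.cost {H : Mesh} : {τ₁ τ₂ : DType} → WkSeq H τ₁ τ₂ → ℕ
  | _, _, .nil _ => 0
  | _, _, @WkSeq.cons _ σ₁ σ₂ _ p _ s => stepCost p σ₁ σ₂ + s.cost

/-! ## Low-level MPI-style collectives on device assignments -/

abbrev DevMap (H : Mesh) (D : Type) := IndexTuple H ≃ D

structure DevAssign (H : Mesh) (D : Type) where
  dmap : DevMap H D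
  bom : BOM H

inductive LLabel where
  | allGather (x : String)
  | allToAll (x : String) (j : ℕ)
  | dynSlice (i : ℕ) (x : String)
  | allPermute
deriving DecidableEq

def LLabel.kind : LLabel → OpKind
  | .allGather _ => .gather
  | .allToAll _ _ => .toAll
  | .dynSlice _ _ => .slice
  | .allPermute => .permute

inductive LStep (H : Mesh) (D : Type) : LLabel → DevAssign H D → DevAssign H D → Type where
  | gather (τ : DType) (i : ℕ) (c : ℕ) (ys : List String) (x : String) (xs : List String)
      (s n : ℕ) (φ φ' : DevMap H D)
      (hwf : H.WFType τ) (hx : H.hasAxis x n)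
      (hi : τ[i]? = some ⟨c, ys ++ x :: xs, s⟩)
      (hmap : typeOffset H (τ.set i ⟨c, x :: (ys ++ xs), s⟩) ∘ ⇑φ'.symm
            = typeOffset H τ ∘ ⇑φ.symm) :
      LStep H D (.allGather x) ⟨φ, typeOffset H τ⟩
        ⟨φ', typeOffset H (τ.set i ⟨c * n, ys ++ xs, s⟩)⟩
  | toAll (τ : DType) (i j : ℕ) (ci : ℕ) (ys : List String) (x : String) (xs : List String)
      (si cj : ℕ) (xsj : List String) (sj n : ℕ) (φ φ' : DevMap H D)
      (hwf : H.WFType τ) (hij : i ≠ j) (hx : H.hasAxis x n)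
      (hi : τ[i]? = some ⟨ci, ys ++ x :: xs, si⟩)
      (hj : τ[j]? = some ⟨cj, xsj, sj⟩)
      (hdvd : n ∣ cj)
      (hmap : typeOffset H (τ.set i ⟨ci, x :: (ys ++ xs), si⟩) ∘ ⇑φ'.symm
            = typeOffset H τ ∘ ⇑φ.symm) :
      LStep H D (.allToAll x j) ⟨φ, typeOffset H τ⟩
        ⟨φ', typeOffset H ((τ.set i ⟨ci * n, ys ++ xs, si⟩).set j ⟨cj / n, x :: xsj, sj⟩)⟩
  | slice (τ : DType) (i : ℕ) (x : String) (c : ℕ) (xs : List String) (s n : ℕ)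
      (φ : DevMap H D)
      (hwf : H.WFType τ) (hx : H.hasAxis x n) (hfresh : x ∉ typeAxes τ)
      (hi : τ[i]? = some ⟨c * n, xs, s⟩) :
      LStep H D (.dynSlice i x) ⟨φ, typeOffset H τ⟩ ⟨φ, typeOffset H (τ.set i ⟨c, x :: xs, s⟩)⟩
  | permute (τ : DType) (ρ : Equiv.Perm (IndexTuple H)) (β' : BOM H)
      (φ φ' : DevMap H D) (π : Equiv.Perm D)
      (hwf : H.WFType τ)
      (hmap : β' ∘ ⇑φ'.symm = (typeOffset H τ ∘ ⇑ρ) ∘ ⇑φ.symm ∘ ⇑π) :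
      LStep H D .allPermute ⟨φ, typeOffset H τ ∘ ⇑ρ⟩ ⟨φ', β'⟩

def LStep.cost {H : Mesh} {D : Type} :
    {l : LLabel} → {a b : DevAssign H D} → LStep H D l a b → ℕ
  | _, _, _, .gather τ i c ys x xs s n .. => localsize (τ.set i ⟨c * n, ys ++ xs, s⟩)
  | _, _, _, .toAll τ .. => localsize τ
  | _, _, _, .slice .. => 0
  | _, _, _, .permute τ .. => localsize τ

inductive LoSeq (H : Mesh) (D : Type) : DevAssign H D → DevAssign H D → Type where
  | nil (a : DevAssign H D) : LoSeq H D a a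
  | cons {a b c : DevAssign H D} (l : LLabel) (st : LStep H D l a b) (s : LoSeq H D b c) :
      LoSeq H D a c

def LoSeq.labels {H : Mesh} {D : Type} : {a b : DevAssign H D} → LoSeq H D a b → List LLabel
  | _, _, .nil _ => []
  | _, _, .cons l _ s => l :: s.labels

def LoSeq.states {H : Mesh} {D : Type} : {a b : DevAssign H D} → LoSeq H D a b → List (DevAssign H D)
  | _, _, .nil a => [a]
  | a, _, .cons _ _ s => a :: s.states

def LoSeq.cost {H : Mesh} {D : Type} : {a b : DevAssign H D} → LoSeq H D a b → ℕ
  | _, _, .nil _ => 0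
  | _, _, .cons _ st s => st.cost + s.cost
lemma dimOffset_congr (H : Mesh) (c : ℕ) (xs : List String) (f g : String → ℕ)
    (h : ∀ x ∈ xs, f x = g x) : dimOffset H c xs f = dimOffset H c xs g := by
  induction xs generalizing c with
  | nil => rfl
  | cons x xs ih =>
    simp only [dimOffset, h x (by simp), ih _ (fun y hy => h y (by simp [hy]))]

lemma dvd_dimOffset (H : Mesh) (c : ℕ) (xs : List String) (f : String → ℕ) :
    c ∣ dimOffset H c xs f := by
  induction xs generalizing c with
  | nil => simp [dimOffset]
  | cons x xs ih =>
    exact dvd_add (dvd_mul_right c _) ((dvd_mul_right c _).trans (ih _))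

lemma dimOffset_add_le (H : Mesh) (c : ℕ) (xs : List String) (f : String → ℕ)
    (h : ∀ x ∈ xs, f x < H.size x) :
    dimOffset H c xs f + c ≤ c * (xs.map H.size).prod := by
  induction xs generalizing c with
  | nil => simp [dimOffset]
  | cons x xs ih =>
    simp only [dimOffset, List.map_cons, List.prod_cons]
    have h1 : c * f x + c ≤ c * H.size x := by
      have := h x (by simp)
      nlinarith
    have h2 := ih (c * H.size x) (fun y hy => h y (by simp [hy]))
    calc c * f x + dimOffset H (c * H.size x) xs f + c
        = (c * f x + c) + dimOffset H (c * H.size x) xs f := by ring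
      _ ≤ c * H.size x + dimOffset H (c * H.size x) xs f := by omega
      _ ≤ c * H.size x * (xs.map H.size).prod := by omega
      _ = c * (H.size x * (xs.map H.size).prod) := by ring

lemma dimOffset_surj (H : Mesh) (c : ℕ) (xs : List String) (m : ℕ)
    (hnd : xs.Nodup) (hax : ∀ x ∈ xs, x ∈ H.axes) (hc : 1 ≤ c)
    (hdvd : c ∣ m) (hlt : m < c * (xs.map H.size).prod) :
    ∃ f : String → ℕ, (∀ x ∈ xs, f x < H.size x) ∧ dimOffset H c xs f = m := by
  induction xs generalizing c m with
  | nil =>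
    refine ⟨fun _ => 0, by simp, ?_⟩
    simp only [List.map_nil, List.prod_nil, mul_one] at hlt
    have : m = 0 := by
      rcases hdvd with ⟨q, rfl⟩
      rcases Nat.eq_zero_or_pos q with hq | hq
      · simp [hq]
      · nlinarith
    simp [dimOffset, this]
  | cons x xs ih =>
    obtain ⟨q, rfl⟩ := hdvd
    have hk : 0 < H.size x := H.size_pos x (hax x (by simp))
    set k := H.size x with hkdef
    have hck : 1 ≤ c * k := Nat.one_le_iff_ne_zero.mpr (by positivity)
    have hq : q < k * (xs.map H.size).prod := by
      simp only [List.map_cons, List.prod_cons] at hlt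
      nlinarith
    have hlt' : c * k * (q / k) < c * k * (xs.map H.size).prod := by
      have : q / k < (xs.map H.size).prod := by
        rw [Nat.div_lt_iff_lt_mul hk, mul_comm]
        exact hq
      exact mul_lt_mul_of_pos_left this (by positivity)
    obtain ⟨g, hg1, hg2⟩ := ih (c * k) (c * k * (q / k)) (List.Nodup.of_cons hnd)
      (fun y hy => hax y (by simp [hy])) hck (dvd_mul_right _ _) hlt'
    have hxnot : x ∉ xs := (List.nodup_cons.mp hnd).1
    refine ⟨Function.update g x (q % k), ?_, ?_⟩
    · intro y hy
      rcases List.mem_cons.mp hy with rfl | hy'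
      · simpa [Function.update] using Nat.mod_lt q hk
      · have hne : y ≠ x := fun hxy => hxnot (hxy ▸ hy')
        simpa [Function.update, hne] using hg1 y hy'
    · simp only [dimOffset]
      have hcg : dimOffset H (c * k) xs (Function.update g x (q % k))
          = dimOffset H (c * k) xs g := by
        apply dimOffset_congr
        intro y hy
        have hne : y ≠ x := fun hxy => hxnot (hxy ▸ hy)
        simp [Function.update, hne]
      rw [← hkdef, hcg, hg2, Function.update_self]
      have : q % k + k * (q / k) = q := Nat.mod_add_div q k
      calc c * (q % k) + c * k * (q / k) = c * (q % k + k * (q / k)) := by ring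
        _ = c * q := by rw [this]

lemma exists_tuple (H : Mesh) (τ : DType) (l : List ℕ)
    (hwf : ∀ d ∈ τ, H.WFDim d)
    (hpw : List.Pairwise (fun d e => ∀ x ∈ d.axes, x ∉ e.axes) τ)
    (hf : List.Forall₂ (fun d m => d.tile ∣ m ∧ m < d.global) τ l) :
    ∃ f : String → ℕ, (∀ x, (x ∈ H.axes → f x < H.size x) ∧ (x ∉ H.axes → f x = 0)) ∧
      τ.map (fun d => dimOffset H d.tile d.axes f) = l := by
  induction hf with
  | nil => exact ⟨fun _ => 0, fun x => ⟨fun hx => H.size_pos x hx, fun _ => rfl⟩, rfl⟩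
  | @cons d m τ' l' hdm htail ih =>
    obtain ⟨hdisj, hpw'⟩ := List.pairwise_cons.mp hpw
    obtain ⟨g, hg1, hg2⟩ := ih (fun e he => hwf e (List.mem_cons_of_mem _ he)) hpw'
    obtain ⟨hc, hnd, hax, hprod⟩ := hwf d List.mem_cons_self
    obtain ⟨f0, hf01, hf02⟩ := dimOffset_surj H d.tile d.axes m hnd hax hc hdm.1
      (hprod ▸ hdm.2)
    refine ⟨fun x => if x ∈ d.axes then f0 x else g x, ?_, ?_⟩
    · intro x
      constructor
      · intro hx
        by_cases hxd : x ∈ d.axes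
        · simpa [hxd] using hf01 x hxd
        · simpa [hxd] using (hg1 x).1 hx
      · intro hx
        have hxd : x ∉ d.axes := fun hxd => hx (hax x hxd)
        simpa [hxd] using (hg1 x).2 hx
    · simp only [List.map_cons]
      congr 1
      · rw [← hf02]
        exact dimOffset_congr _ _ _ _ _ (fun x hx => by simp [hx])
      · rw [← hg2]
        apply List.map_congr_left
        intro e he
        apply dimOffset_congr
        intro x hx
        have hxd : x ∉ d.axes := fun hxd => hdisj e he x hxd hx
        simp [hxd]

/-- Lemma 4.2: the image of the base offset map of a well-formed distributed type
consists of all base offsets lexicographically below its global type. -/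
theorem stmt1 (H : Mesh) (τ : DType) (h : H.WFType τ) :
    Set.range (typeOffset H τ)
      = {l : List ℕ | List.Forall₂ (fun d m => d.tile ∣ m ∧ m < d.global) τ l} := by
  ext l
  simp only [Set.mem_range, Set.mem_setOf_eq]
  constructor
  · rintro ⟨ι, rfl⟩
    rw [typeOffset, List.forall₂_map_right_iff]
    rw [List.forall₂_same]
    intro d hd
    obtain ⟨hc, hnd, hax, hprod⟩ := h.1 d hd
    constructor
    · exact dvd_dimOffset _ _ _ _
    · have hlt := dimOffset_add_le H d.tile d.axes ι.val
        (fun x hx => (ι.property x).1 (hax x hx))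
      omega
  · intro hl
    obtain ⟨f, hval, heq⟩ := exists_tuple H τ l h.1 h.2 hl
    exact ⟨⟨f, hval⟩, heq⟩
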